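/- Let ρ₁ = E[|Ω⟩⟨Ω|/⟨Ω|Ω⟩] where |Ω⟩ = (‖c‖₁/k)·Σ_{α=1}^k|ω_α⟩ with |ω_α⟩ i.i.d. random unit vectors satisfying E[|ω_α⟩] = |ψ⟩/‖c‖₁ for a unit vector ψ. Then ‖ρ₁ − |ψ⟩⟨ψ|‖₁ ≤ 2‖c‖₁²/k + √(Var[⟨Ω|Ω⟩]). -/

import Mathlib

open Matrix
open scoped ComplexOrder

noncomputable section

/-- The dyad `|L⟩⟨R|` as a matrix. -/
def dyadM {d : ℕ} (L R : Fin d → ℂ) : Matrix (Fin d) (Fin d) ℂ :=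
  Matrix.vecMulVec L (star R)

/-- The pure-state extent `ξ(Ψ)` with respect to a free set `S`. -/
def extent {d : ℕ} (S : Set (Fin d → ℂ)) (Ψ : Fin d → ℂ) : ℝ :=
  sInf {r : ℝ | ∃ (m : ℕ) (c : Fin m → ℂ) (φ : Fin m → (Fin d → ℂ)),
    (∀ j, φ j ∈ S) ∧ Ψ = ∑ j, c j • φ j ∧ r = (∑ j, ‖c j‖) ^ 2}

/-- The dyadic negativity `Λ(ρ)` with respect to a free set `S`. -/
def dyadicNeg {d : ℕ} (S : Set (Fin d → ℂ)) (ρ : Matrix (Fin d) (Fin d) ℂ) : ℝ :=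
  sInf {r : ℝ | ∃ (m : ℕ) (α : Fin m → ℂ) (L R : Fin m → (Fin d → ℂ)),
    (∀ j, L j ∈ S) ∧ (∀ j, R j ∈ S) ∧
    ρ = ∑ j, α j • dyadM (L j) (R j) ∧ r = ∑ j, ‖α j‖}

/-- The generalized robustness `Λ⁺(ρ)`: the maximum of `Tr[Wρ]` over positive
semidefinite witnesses `W` with `⟨φ|W|φ⟩ ≤ 1` for all free `φ`. -/
def genRob {d : ℕ} (S : Set (Fin d → ℂ)) (ρ : Matrix (Fin d) (Fin d) ℂ) : ℝ :=
  sSup {r : ℝ | ∃ W : Matrix (Fin d) (Fin d) ℂ, W.PosSemidef ∧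
    (∀ φ ∈ S, (star φ ⬝ᵥ (W *ᵥ φ)).re ≤ 1) ∧ r = ((W * ρ).trace).re}

/-- The mixed-state extent `Ξ(ρ)`: the convex-roof extension of the extent. -/
def mixedExtent {d : ℕ} (S : Set (Fin d → ℂ)) (ρ : Matrix (Fin d) (Fin d) ℂ) : ℝ :=
  sInf {r : ℝ | ∃ (m : ℕ) (p : Fin m → ℝ) (Ψ : Fin m → (Fin d → ℂ)),
    (∀ j, 0 ≤ p j) ∧ (∑ j, p j) = 1 ∧ (∀ j, star (Ψ j) ⬝ᵥ Ψ j = 1) ∧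
    ρ = ∑ j, (p j : ℂ) • dyadM (Ψ j) (Ψ j) ∧ r = ∑ j, p j * extent S (Ψ j)}

/-- The trace norm (Schatten 1-norm) of a complex matrix: the sum of the square
roots of the eigenvalues of `Aᴴ * A`. -/
def traceNorm {d : ℕ} (A : Matrix (Fin d) (Fin d) ℂ) : ℝ :=
  ∑ i, Real.sqrt ((Matrix.isHermitian_conjTranspose_mul_self A).eigenvalues i)

/-- The squared Euclidean norm `⟨w|w⟩` of a complex vector. -/
def nsq {d : ℕ} (w : Fin d → ℂ) : ℝ := (star w ⬝ᵥ w).re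

/-- The random sparsified vector `|Ω⟩ = (‖c‖₁/k)·Σ_α |ω_α⟩`, for the outcome in
which the `α`-th sample takes the value `v (g α)`. -/
def sparseVec {d : ℕ} {J : Type*} (c1 : ℝ) (k : ℕ) (v : J → Fin d → ℂ)
    (g : Fin k → J) : Fin d → ℂ :=
  ((c1 : ℂ) / (k : ℂ)) • ∑ α, v (g α)

/-- The probability of the i.i.d. outcome `g` under the single-sample
distribution `p`. -/
def prodProb {J : Type*} (p : J → ℝ) {k : ℕ} (g : Fin k → J) : ℝ := ∏ α, p (g α)

/-- The mean `E[⟨Ω|Ω⟩]` of the squared norm of the sparsified vector. -/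
def meanNsq {d : ℕ} {J : Type*} [Fintype J] (p : J → ℝ) (c1 : ℝ) (k : ℕ)
    (v : J → Fin d → ℂ) : ℝ :=
  ∑ g : Fin k → J, prodProb p g * nsq (sparseVec c1 k v g)

/-- The variance `Var[⟨Ω|Ω⟩]` of the squared norm of the sparsified vector. -/
def varNsq {d : ℕ} {J : Type*} [Fintype J] (p : J → ℝ) (c1 : ℝ) (k : ℕ)
    (v : J → Fin d → ℂ) : ℝ :=
  ∑ g : Fin k → J, prodProb p g * (nsq (sparseVec c1 k v g) - meanNsq p c1 k v) ^ 2

/-- The constant `C = ‖c‖₁²·⟨ψ|σ|ψ⟩` with `σ = E[|ω_α⟩⟨ω_α|]`. -/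
def Cconst {d : ℕ} {J : Type*} [Fintype J] (p : J → ℝ) (v : J → Fin d → ℂ)
    (ψ : Fin d → ℂ) (c1 : ℝ) : ℝ :=
  c1 ^ 2 * (star ψ ⬝ᵥ ((∑ j, (p j : ℂ) • dyadM (v j) (v j)) *ᵥ ψ)).re

/-- The ensemble `ρ₁ = E[|Ω⟩⟨Ω|/⟨Ω|Ω⟩]` of normalized sparsified states. -/
def rhoOne {d : ℕ} {J : Type*} [Fintype J] (p : J → ℝ) (c1 : ℝ) (k : ℕ)
    (v : J → Fin d → ℂ) : Matrix (Fin d) (Fin d) ℂ :=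
  ∑ g : Fin k → J, ((prodProb p g / nsq (sparseVec c1 k v g) : ℝ) : ℂ) •
    dyadM (sparseVec c1 k v g) (sparseVec c1 k v g)

lemma nsq_eq_sum {d : ℕ} (w : Fin d → ℂ) :
    nsq w = ∑ i, Complex.normSq (w i) := by
  simp [nsq, dotProduct, Complex.normSq_apply, Complex.re_sum, Complex.mul_re]

lemma nsq_nonneg {d : ℕ} (w : Fin d → ℂ) : 0 ≤ nsq w := by
  rw [nsq_eq_sum]; exact Finset.sum_nonneg fun i _ => Complex.normSq_nonneg _

lemma dyadM_isHermitian {d : ℕ} (w : Fin d → ℂ) : (dyadM w w).IsHermitian := by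
  ext i j
  simp [dyadM, Matrix.vecMulVec_apply, Matrix.conjTranspose_apply, mul_comm]

lemma trace_mul_dyadM {d : ℕ} (X : Matrix (Fin d) (Fin d) ℂ) (w : Fin d → ℂ) :
    (X * dyadM w w).trace = star w ⬝ᵥ (X *ᵥ w) := by
  simp only [dyadM, Matrix.trace, Matrix.diag, Matrix.mul_apply, Matrix.vecMulVec_apply,
    dotProduct, Matrix.mulVec, Pi.star_apply, Finset.mul_sum]
  exact Finset.sum_congr rfl fun i _ => Finset.sum_congr rfl fun j _ => by ring

lemma trace_dyadM {d : ℕ} (w : Fin d → ℂ) : ((dyadM w w).trace).re = nsq w := by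
  simp [dyadM, Matrix.trace, Matrix.diag, Matrix.vecMulVec_apply, nsq_eq_sum,
    Complex.re_sum, Complex.mul_re, Complex.normSq_apply]

lemma mySign_mul_self (x : ℝ) : Real.sign x * x = |x| := by
  rcases lt_trichotomy x 0 with h | h | h
  · rw [Real.sign_of_neg h, abs_of_neg h]; ring
  · simp [h]
  · rw [Real.sign_of_pos h, abs_of_pos h]; ring

lemma abs_sign_le_one (x : ℝ) : |Real.sign x| ≤ 1 := by
  rcases lt_trichotomy x 0 with h | h | h
  · rw [Real.sign_of_neg h]; norm_num
  · simp [h, Real.sign_zero]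
  · rw [Real.sign_of_pos h]; norm_num

theorem traceNorm_sum_dyad_le {d : ℕ} {ι : Type*} [Fintype ι] (c : ι → ℝ)
    (w : ι → Fin d → ℂ) :
    traceNorm (∑ j, (c j : ℂ) • dyadM (w j) (w j)) ≤ ∑ j, |c j| * nsq (w j) := by
  classical
  set H : Matrix (Fin d) (Fin d) ℂ := ∑ j, (c j : ℂ) • dyadM (w j) (w j) with hHdef
  have hH : H.IsHermitian := by
    unfold Matrix.IsHermitian
    rw [hHdef, Matrix.conjTranspose_sum]
    refine Finset.sum_congr rfl fun j _ => ?_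
    rw [Matrix.conjTranspose_smul, (dyadM_isHermitian (w j)).eq]
    congr 1
    simp [Complex.star_def, Complex.conj_ofReal]
  set U : Matrix (Fin d) (Fin d) ℂ := (Matrix.IsHermitian.eigenvectorUnitary hH : Matrix (Fin d) (Fin d) ℂ) with hUdef
  set lam : Fin d → ℝ := hH.eigenvalues with hlam
  have hU1 : star U * U = 1 :=
    Matrix.mem_unitaryGroup_iff'.mp (Matrix.IsHermitian.eigenvectorUnitary hH).2
  have hU2 : U * star U = 1 :=
    Matrix.mem_unitaryGroup_iff.mp (Matrix.IsHermitian.eigenvectorUnitary hH).2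
  have key : ∀ F G : Fin d → ℂ,
      (U * Matrix.diagonal F * star U) * (U * Matrix.diagonal G * star U)
        = U * Matrix.diagonal (fun i => F i * G i) * star U := by
    intro F G
    rw [← Matrix.diagonal_mul_diagonal]
    calc (U * Matrix.diagonal F * star U) * (U * Matrix.diagonal G * star U)
        = U * (Matrix.diagonal F * ((star U * U) * (Matrix.diagonal G * star U))) := by
          simp only [Matrix.mul_assoc]
      _ = U * (Matrix.diagonal F * Matrix.diagonal G) * star U := by
          rw [hU1, Matrix.one_mul]; simp only [Matrix.mul_assoc]
  have htr : ∀ F : Fin d → ℂ, (U * Matrix.diagonal F * star U).trace = ∑ i, F i := by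
    intro F
    rw [Matrix.trace_mul_cycle, hU1, Matrix.one_mul, Matrix.trace_diagonal]
  have spec : H = U * Matrix.diagonal (fun i => (lam i : ℂ)) * star U := by
    have := hH.spectral_theorem
    simp only [Unitary.conjStarAlgAut_apply, Unitary.coe_star] at this
    rw [this]; rfl
  -- the positive square root of H^2
  set B : Matrix (Fin d) (Fin d) ℂ :=
    U * Matrix.diagonal (fun i => ((|lam i| : ℝ) : ℂ)) * star U with hBdef
  set X : Matrix (Fin d) (Fin d) ℂ :=
    U * Matrix.diagonal (fun i => ((Real.sign (lam i) : ℝ) : ℂ)) * star U with hXdef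
  have hP : (Hᴴ * H).PosSemidef := Matrix.posSemidef_conjTranspose_mul_self H
  have hBP : B.PosSemidef := by
    rw [hBdef, Matrix.star_eq_conjTranspose]
    refine Matrix.PosSemidef.mul_mul_conjTranspose_same ?_ U
    refine Matrix.posSemidef_diagonal_iff.mpr fun i => ?_
    rw [Complex.zero_le_real]
    exact abs_nonneg _
  have hB2 : B ^ 2 = Hᴴ * H := by
    rw [hH.eq, pow_two, hBdef, key, spec, key]
    have hfg : (fun i => ((|lam i| : ℝ) : ℂ) * ((|lam i| : ℝ) : ℂ))
        = fun i => ((lam i : ℝ) : ℂ) * ((lam i : ℝ) : ℂ) := by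
      funext i
      rw [← Complex.ofReal_mul, ← Complex.ofReal_mul, abs_mul_abs_self]
    rw [hfg]
  open MatrixOrder in
  have hsqrt : B = CFC.sqrt (Hᴴ * H) := by
    exact (CFC.sqrt_unique ((pow_two B).symm.trans hB2) hBP.nonneg).symm
  open MatrixOrder in
  have htn : traceNorm H = (CFC.sqrt (Hᴴ * H)).trace.re := by
    show (∑ i, Real.sqrt ((Matrix.isHermitian_conjTranspose_mul_self H).eigenvalues i)) = _
    have hs : CFC.sqrt (Hᴴ * H) = (hP.1.eigenvectorUnitary : Matrix (Fin d) (Fin d) ℂ) *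
        Matrix.diagonal (RCLike.ofReal ∘ Real.sqrt ∘ hP.1.eigenvalues) *
        (star hP.1.eigenvectorUnitary : Matrix (Fin d) (Fin d) ℂ) := by
      rw [CFC.sqrt_eq_cfc, cfc_nnreal_eq_real _ _ hP.nonneg, hP.1.cfc_eq]
      simp only [IsHermitian.cfc, Unitary.conjStarAlgAut_apply, Unitary.coe_star]
      congr 3
      funext i
      simp [Real.coe_sqrt, Real.coe_toNNReal', max_eq_left (hP.eigenvalues_nonneg i)]
    rw [hs, Matrix.trace_mul_cycle,
      Matrix.mem_unitaryGroup_iff'.mp hP.1.eigenvectorUnitary.2, Matrix.one_mul,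
      Matrix.trace_diagonal]
    rw [Complex.re_sum]
    rfl
  have hXH : X * H = B := by
    rw [hXdef, spec, key, hBdef]
    have hfg : (fun i => ((Real.sign (lam i) : ℝ) : ℂ) * ((lam i : ℝ) : ℂ))
        = fun i => ((|lam i| : ℝ) : ℂ) := by
      funext i
      rw [← Complex.ofReal_mul, mySign_mul_self]
    rw [hfg]
  have htrB : (B.trace).re = ∑ i, |lam i| := by
    rw [hBdef, htr, Complex.re_sum]
    simp
  have step1 : traceNorm H = ((X * H).trace).re := by
    rw [htn, ← hsqrt, hXH]
  have step2 : ((X * H).trace).re = ∑ j, c j * (star (w j) ⬝ᵥ (X *ᵥ w j)).re := by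
    rw [hHdef, Matrix.mul_sum]
    simp only [Matrix.mul_smul, Matrix.trace_sum, Matrix.trace_smul, trace_mul_dyadM]
    rw [Complex.re_sum]
    refine Finset.sum_congr rfl fun j _ => ?_
    simp [Complex.smul_re]
  rw [step1, step2]
  refine Finset.sum_le_sum fun j _ => ?_
  have hb : |(star (w j) ⬝ᵥ (X *ᵥ w j)).re| ≤ nsq (w j) := by
    set u : Fin d → ℂ := star U *ᵥ (w j) with hu
    have hsw : star (w j) ᵥ* U = star u := by
      rw [hu, Matrix.star_mulVec, Matrix.star_eq_conjTranspose,
        Matrix.conjTranspose_conjTranspose]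
    have hXv : X *ᵥ (w j) = U *ᵥ (Matrix.diagonal (fun i => ((Real.sign (lam i) : ℝ) : ℂ)) *ᵥ u) := by
      rw [hXdef, hu, Matrix.mulVec_mulVec, Matrix.mulVec_mulVec]
    have hq : star (w j) ⬝ᵥ (X *ᵥ w j)
        = ∑ i, ((Real.sign (lam i) * Complex.normSq (u i) : ℝ) : ℂ) := by
      rw [hXv, Matrix.dotProduct_mulVec (star (w j)) U, hsw, dotProduct]
      refine Finset.sum_congr rfl fun i _ => ?_
      rw [Pi.star_apply, Matrix.mulVec_diagonal]
      have : star (u i) * (((Real.sign (lam i) : ℝ) : ℂ) * u i)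
          = ((Real.sign (lam i) : ℝ) : ℂ) * (u i * star (u i)) := by ring
      rw [this, Complex.star_def, Complex.mul_conj, ← Complex.ofReal_mul]
    have hre : (star (w j) ⬝ᵥ (X *ᵥ w j)).re = ∑ i, Real.sign (lam i) * Complex.normSq (u i) := by
      rw [hq, Complex.re_sum]
      simp
    have hnu : nsq u = nsq (w j) := by
      unfold nsq
      rw [hu]
      rw [Matrix.star_mulVec, Matrix.star_eq_conjTranspose, Matrix.conjTranspose_conjTranspose]
      have hU2' : U * Uᴴ = 1 := by rw [← Matrix.star_eq_conjTranspose]; exact hU2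
      rw [← Matrix.dotProduct_mulVec, Matrix.mulVec_mulVec, hU2', Matrix.one_mulVec]
    calc |(star (w j) ⬝ᵥ (X *ᵥ w j)).re| ≤ ∑ i, |Real.sign (lam i) * Complex.normSq (u i)| := by
          rw [hre]; exact Finset.abs_sum_le_sum_abs _ _
      _ ≤ ∑ i, Complex.normSq (u i) := by
          refine Finset.sum_le_sum fun i _ => ?_
          rw [abs_mul, abs_of_nonneg (Complex.normSq_nonneg _)]
          exact mul_le_of_le_one_left (Complex.normSq_nonneg _) (abs_sign_le_one _)
      _ = nsq u := (nsq_eq_sum u).symm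
      _ = nsq (w j) := hnu
  calc c j * (star (w j) ⬝ᵥ (X *ᵥ w j)).re ≤ |c j * (star (w j) ⬝ᵥ (X *ᵥ w j)).re| := le_abs_self _
    _ = |c j| * |(star (w j) ⬝ᵥ (X *ᵥ w j)).re| := abs_mul _ _
    _ ≤ |c j| * nsq (w j) := mul_le_mul_of_nonneg_left hb (abs_nonneg _)

lemma sum_ofReal_eq_one {J : Type*} [Fintype J] {p : J → ℝ} (hp1 : ∑ j, p j = 1) :
    (∑ j, (p j : ℂ)) = 1 := by
  rw [← Complex.ofReal_sum, hp1, Complex.ofReal_one]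

lemma prodProb_nonneg {J : Type*} {p : J → ℝ} (hp : ∀ j, 0 ≤ p j) {k : ℕ}
    (g : Fin k → J) : 0 ≤ prodProb p g :=
  Finset.prod_nonneg fun γ _ => hp (g γ)

lemma sum_prodProb {J : Type*} [Fintype J] {p : J → ℝ} (hp1 : ∑ j, p j = 1) (k : ℕ) :
    ∑ g : Fin k → J, prodProb p g = 1 := by
  classical
  unfold prodProb
  rw [← Fintype.prod_sum (fun (_ : Fin k) (j : J) => p j)]
  simp [hp1]

lemma iid_sum_single {J : Type*} [Fintype J] (p : J → ℝ) (hp1 : ∑ j, p j = 1)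
    {k : ℕ} (α : Fin k) (A : J → ℂ) :
    ∑ g : Fin k → J, (prodProb p g : ℂ) * A (g α) = ∑ a, (p a : ℂ) * A a := by
  classical
  have h1 : ∀ g : Fin k → J, (prodProb p g : ℂ) * A (g α)
      = ∏ γ, ((p (g γ) : ℂ) * (if γ = α then A (g γ) else 1)) := by
    intro g
    rw [Finset.prod_mul_distrib, Finset.prod_ite_eq' Finset.univ α (fun γ => A (g γ))]
    simp [prodProb]
  simp_rw [h1]
  rw [← Fintype.prod_sum (fun (γ : Fin k) (j : J) => (p j : ℂ) * (if γ = α then A j else 1))]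
  have h2 : ∀ γ : Fin k, (∑ j, (p j : ℂ) * (if γ = α then A j else 1))
      = if γ = α then ∑ a, (p a : ℂ) * A a else 1 := by
    intro γ
    by_cases h : γ = α
    · simp [h]
    · simp [h, sum_ofReal_eq_one hp1]
  simp_rw [h2]
  rw [Finset.prod_ite_eq' Finset.univ α (fun _ => ∑ a, (p a : ℂ) * A a)]
  simp

lemma iid_sum_pair {J : Type*} [Fintype J] (p : J → ℝ) (hp1 : ∑ j, p j = 1)
    {k : ℕ} {α β : Fin k} (hne : α ≠ β) (A B : J → ℂ) :
    ∑ g : Fin k → J, (prodProb p g : ℂ) * (A (g α) * B (g β))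
      = (∑ a, (p a : ℂ) * A a) * (∑ b, (p b : ℂ) * B b) := by
  classical
  have h1 : ∀ g : Fin k → J, (prodProb p g : ℂ) * (A (g α) * B (g β))
      = ∏ γ, ((p (g γ) : ℂ) * (if γ = α then A (g γ) else 1)
              * (if γ = β then B (g γ) else 1)) := by
    intro g
    rw [Finset.prod_mul_distrib, Finset.prod_mul_distrib,
      Finset.prod_ite_eq' Finset.univ α (fun γ => A (g γ)),
      Finset.prod_ite_eq' Finset.univ β (fun γ => B (g γ))]
    simp only [Finset.mem_univ, if_true, prodProb]
    push_cast
    ring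
  simp_rw [h1]
  rw [← Fintype.prod_sum (fun (γ : Fin k) (j : J) =>
    (p j : ℂ) * (if γ = α then A j else 1) * (if γ = β then B j else 1))]
  have h2 : ∀ γ : Fin k,
      (∑ j, (p j : ℂ) * (if γ = α then A j else 1) * (if γ = β then B j else 1))
      = (if γ = α then ∑ a, (p a : ℂ) * A a else 1)
        * (if γ = β then ∑ b, (p b : ℂ) * B b else 1) := by
    intro γ
    by_cases ha : γ = α <;> by_cases hb : γ = β
    · exact absurd (ha ▸ hb) hne
    · simp [ha, hb, hne]
    · simp [ha, hb, hne.symm]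
    · simp [ha, hb, sum_ofReal_eq_one hp1]
  simp_rw [h2]
  rw [Finset.prod_mul_distrib,
    Finset.prod_ite_eq' Finset.univ α (fun _ => ∑ a, (p a : ℂ) * A a),
    Finset.prod_ite_eq' Finset.univ β (fun _ => ∑ b, (p b : ℂ) * B b)]
  simp

lemma jensen_abs {ι : Type*} [Fintype ι] (P x : ι → ℝ) (hP : ∀ i, 0 ≤ P i)
    (hP1 : ∑ i, P i = 1) :
    ∑ i, P i * |x i| ≤ Real.sqrt (∑ i, P i * (x i) ^ 2) := by
  refine Real.le_sqrt_of_sq_le ?_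
  have h := Finset.sum_mul_sq_le_sq_mul_sq Finset.univ
    (fun i => Real.sqrt (P i)) (fun i => Real.sqrt (P i) * |x i|)
  have e1 : ∀ i : ι, Real.sqrt (P i) * (Real.sqrt (P i) * |x i|) = P i * |x i| := by
    intro i
    rw [← mul_assoc, Real.mul_self_sqrt (hP i)]
  have e2 : ∀ i : ι, Real.sqrt (P i) ^ 2 = P i := fun i => Real.sq_sqrt (hP i)
  have e3 : ∀ i : ι, (Real.sqrt (P i) * |x i|) ^ 2 = P i * (x i) ^ 2 := by
    intro i
    rw [mul_pow, Real.sq_sqrt (hP i), sq_abs]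
  simp_rw [e1, e2, e3, hP1, one_mul] at h
  exact h

lemma dyadM_apply {d : ℕ} (L R : Fin d → ℂ) (x y : Fin d) :
    dyadM L R x y = L x * star (R y) := by
  simp [dyadM, Matrix.vecMulVec_apply]

lemma second_moment {d : ℕ} {J : Type*} [Fintype J] (p : J → ℝ) (v : J → Fin d → ℂ)
    (ψ : Fin d → ℂ) (c1 : ℝ) (k : ℕ) (hk : 1 ≤ k) (hc1 : 1 ≤ c1)
    (hp1 : ∑ j, p j = 1)
    (hmean : ∑ j, (p j : ℂ) • v j = ((c1 : ℂ))⁻¹ • ψ) :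
    ∑ g : Fin k → J, ((prodProb p g : ℝ) : ℂ) • dyadM (sparseVec c1 k v g) (sparseVec c1 k v g)
      = ((1 - 1/(k : ℝ) : ℝ) : ℂ) • dyadM ψ ψ
        + ((c1 ^ 2 / (k : ℝ) : ℝ) : ℂ) • ∑ j, (p j : ℂ) • dyadM (v j) (v j) := by
  classical
  have hkC : (k : ℂ) ≠ 0 := by
    exact_mod_cast Nat.cast_ne_zero.mpr (by omega)
  have hc1C : (c1 : ℂ) ≠ 0 := by
    exact_mod_cast Complex.ofReal_ne_zero.mpr (by linarith)
  set q : ℂ := (c1 : ℂ) / (k : ℂ) with hq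
  have hSA : ∀ x, (∑ a, (p a : ℂ) * v a x) = (c1 : ℂ)⁻¹ * ψ x := by
    intro x
    have := congrFun hmean x
    simpa [Finset.sum_apply, Pi.smul_apply, smul_eq_mul] using this
  have hSB : ∀ y, (∑ a, (p a : ℂ) * star (v a y)) = (c1 : ℂ)⁻¹ * star (ψ y) := by
    intro y
    have h := congrArg star (hSA y)
    rw [star_sum] at h
    simpa [Complex.star_def, Complex.conj_ofReal, map_inv₀] using h
  ext x y
  set D : ℂ := ∑ a, (p a : ℂ) * (v a x * star (v a y)) with hD
  set E2 : ℂ := ((c1 : ℂ)⁻¹ * ψ x) * ((c1 : ℂ)⁻¹ * star (ψ y)) with hE2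
  have hT : ∀ α β : Fin k,
      (∑ g : Fin k → J, (prodProb p g : ℂ) * (v (g α) x * star (v (g β) y)))
        = if α = β then D else E2 := by
    intro α β
    by_cases h : α = β
    · subst h
      rw [if_pos rfl, hD]
      exact iid_sum_single p hp1 α (fun a => v a x * star (v a y))
    · rw [if_neg h, hE2, ← hSA x, ← hSB y]
      exact iid_sum_pair p hp1 h (fun a => v a x) (fun a => star (v a y))
  have hΩ : ∀ g : Fin k → J, (sparseVec c1 k v g) x * star ((sparseVec c1 k v g) y)
      = q ^ 2 * ∑ α : Fin k, ∑ β : Fin k, (v (g α) x * star (v (g β) y)) := by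
    intro g
    have h1 : (sparseVec c1 k v g) x = q * ∑ α, v (g α) x := by
      simp [sparseVec, hq, Finset.sum_apply]
    have h2 : star ((sparseVec c1 k v g) y) = q * ∑ β, star (v (g β) y) := by
      have h3 : (sparseVec c1 k v g) y = q * ∑ β, v (g β) y := by
        simp [sparseVec, hq, Finset.sum_apply]
      rw [h3, star_mul', star_sum]
      have hqq : star q = q := by
        rw [hq]
        simp [Complex.star_def, map_div₀, Complex.conj_ofReal]
      rw [hqq, mul_comm]
    rw [h1, h2, show (q * ∑ α : Fin k, v (g α) x) * (q * ∑ β : Fin k, star (v (g β) y))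
      = q ^ 2 * ((∑ α : Fin k, v (g α) x) * (∑ β : Fin k, star (v (g β) y))) from by ring,
      Finset.sum_mul_sum]
  have hLHS : (∑ g : Fin k → J, ((prodProb p g : ℝ) : ℂ) •
        dyadM (sparseVec c1 k v g) (sparseVec c1 k v g)) x y
      = q ^ 2 * ((k : ℂ) * D + ((k : ℂ) ^ 2 - (k : ℂ)) * E2) := by
    rw [Matrix.sum_apply]
    simp only [Matrix.smul_apply, dyadM_apply, smul_eq_mul]
    calc (∑ g : Fin k → J, (prodProb p g : ℂ) *
            ((sparseVec c1 k v g) x * star ((sparseVec c1 k v g) y)))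
        = ∑ g : Fin k → J, ∑ α : Fin k, ∑ β : Fin k,
            q ^ 2 * ((prodProb p g : ℂ) * (v (g α) x * star (v (g β) y))) := by
          refine Finset.sum_congr rfl fun g _ => ?_
          rw [hΩ g]
          simp only [Finset.mul_sum]
          exact Finset.sum_congr rfl fun α _ => Finset.sum_congr rfl fun β _ => by ring
      _ = ∑ α : Fin k, ∑ β : Fin k, ∑ g : Fin k → J,
            q ^ 2 * ((prodProb p g : ℂ) * (v (g α) x * star (v (g β) y))) := by
          rw [Finset.sum_comm]
          exact Finset.sum_congr rfl fun α _ => Finset.sum_comm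
      _ = ∑ α : Fin k, ∑ β : Fin k, q ^ 2 * (if α = β then D else E2) := by
          refine Finset.sum_congr rfl fun α _ => Finset.sum_congr rfl fun β _ => ?_
          rw [← Finset.mul_sum, hT α β]
      _ = q ^ 2 * ((k : ℂ) * D + ((k : ℂ) ^ 2 - (k : ℂ)) * E2) := by
          have hrow : ∀ α : Fin k, (∑ β : Fin k, (if α = β then D else E2))
              = D + ((k : ℂ) - 1) * E2 := by
            intro α
            have hsplit : ∀ β : Fin k, (if α = β then D else E2)
                = E2 + (if α = β then D - E2 else 0) := by
              intro β; by_cases h : α = β <;> simp [h]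
            simp_rw [hsplit]
            rw [Finset.sum_add_distrib, Finset.sum_const, Finset.sum_ite_eq]
            simp [Finset.card_univ]
            ring
          have hq2 : ∀ α : Fin k, (∑ β : Fin k, q ^ 2 * (if α = β then D else E2))
              = q ^ 2 * (D + ((k : ℂ) - 1) * E2) := by
            intro α
            rw [← Finset.mul_sum, hrow α]
          simp_rw [hq2]
          rw [Finset.sum_const, Finset.card_univ]
          simp [Fintype.card_fin]
          ring
  rw [hLHS]
  rw [Matrix.add_apply, Matrix.smul_apply, Matrix.smul_apply, dyadM_apply,
    Matrix.sum_apply]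
  simp only [Matrix.smul_apply, dyadM_apply, smul_eq_mul]
  rw [show (∑ j, (p j : ℂ) * (v j x * star (v j y))) = D from rfl]
  rw [hq, hE2]
  push_cast
  field_simp
  ring

lemma re_trace_smul_dyad {d : ℕ} (t : ℝ) (w : Fin d → ℂ) :
    (((t : ℂ) • dyadM w w).trace).re = t * nsq w := by
  rw [Matrix.trace_smul, smul_eq_mul, Complex.re_ofReal_mul, trace_dyadM]

lemma meanNsq_eq {d : ℕ} {J : Type*} [Fintype J] (p : J → ℝ) (v : J → Fin d → ℂ)
    (ψ : Fin d → ℂ) (c1 : ℝ) (k : ℕ) (hk : 1 ≤ k) (hc1 : 1 ≤ c1)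
    (hp1 : ∑ j, p j = 1) (hv : ∀ j, nsq (v j) = 1) (hψ : nsq ψ = 1)
    (hmean : ∑ j, (p j : ℂ) • v j = ((c1 : ℂ))⁻¹ • ψ) :
    meanNsq p c1 k v = 1 + (c1 ^ 2 - 1) / (k : ℝ) := by
  have hk0 : (0 : ℝ) < (k : ℝ) := by exact_mod_cast Nat.pos_of_ne_zero (by omega)
  unfold meanNsq
  have h1 : ∀ g : Fin k → J, prodProb p g * nsq (sparseVec c1 k v g)
      = ((((prodProb p g : ℝ) : ℂ) •
          dyadM (sparseVec c1 k v g) (sparseVec c1 k v g)).trace).re := by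
    intro g
    rw [re_trace_smul_dyad]
  simp_rw [h1]
  rw [← Complex.re_sum, ← Matrix.trace_sum,
    second_moment p v ψ c1 k hk hc1 hp1 hmean, Matrix.trace_add, Complex.add_re,
    re_trace_smul_dyad, hψ]
  have h2 : ((((c1 ^ 2 / (k : ℝ) : ℝ) : ℂ) •
      ∑ j, (p j : ℂ) • dyadM (v j) (v j)).trace).re = c1 ^ 2 / (k : ℝ) := by
    rw [Finset.smul_sum]
    have h3 : ∀ j : J, ((c1 ^ 2 / (k : ℝ) : ℝ) : ℂ) • (p j : ℂ) • dyadM (v j) (v j)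
        = (((c1 ^ 2 / (k : ℝ) * p j : ℝ) : ℂ)) • dyadM (v j) (v j) := by
      intro j
      rw [smul_smul]
      norm_cast
    simp_rw [h3]
    rw [Matrix.trace_sum, Complex.re_sum]
    have h4 : ∀ j : J, ((((c1 ^ 2 / (k : ℝ) * p j : ℝ) : ℂ) •
        dyadM (v j) (v j)).trace).re = c1 ^ 2 / (k : ℝ) * p j := by
      intro j
      rw [re_trace_smul_dyad, hv j, mul_one]
    simp_rw [h4]
    rw [← Finset.mul_sum, hp1, mul_one]
  rw [h2]
  field_simp
  ring

/-- **Ensemble sampling lemma.**  Let `ρ₁ = E[|Ω⟩⟨Ω|/⟨Ω|Ω⟩]` where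
`|Ω⟩ = (‖c‖₁/k)·Σ_α|ω_α⟩` with `|ω_α⟩` i.i.d. random unit vectors satisfying
`E[|ω_α⟩] = |ψ⟩/‖c‖₁` for a unit vector `ψ`.  Then
`‖ρ₁ − |ψ⟩⟨ψ|‖₁ ≤ 2‖c‖₁²/k + √(Var[⟨Ω|Ω⟩])`. -/
theorem ensemble_sampling_lemma {d : ℕ} {J : Type*} [Fintype J]
    (p : J → ℝ) (v : J → Fin d → ℂ) (ψ : Fin d → ℂ) (c1 : ℝ) (k : ℕ)
    (hk : 1 ≤ k)
    (hp : ∀ j, 0 ≤ p j) (hp1 : ∑ j, p j = 1)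
    (hv : ∀ j, nsq (v j) = 1) (hψ : nsq ψ = 1) (hc1 : 1 ≤ c1)
    (hmean : ∑ j, (p j : ℂ) • v j = ((c1 : ℂ))⁻¹ • ψ)
    (hpos : ∀ g : Fin k → J, 0 < nsq (sparseVec c1 k v g)) :
    traceNorm (rhoOne p c1 k v - dyadM ψ ψ) ≤
      2 * c1 ^ 2 / (k : ℝ) + Real.sqrt (varNsq p c1 k v) := by
  classical
  have hk0 : (0 : ℝ) < (k : ℝ) := by
    have : 0 < k := by omega
    exact_mod_cast this
  set n : (Fin k → J) → ℝ := fun g => nsq (sparseVec c1 k v g) with hn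
  set P : (Fin k → J) → ℝ := fun g => prodProb p g with hPdef
  set μ : ℝ := meanNsq p c1 k v with hμdef
  have hμ : μ = 1 + (c1 ^ 2 - 1) / (k : ℝ) :=
    meanNsq_eq p v ψ c1 k hk hc1 hp1 hv hψ hmean
  have hPnn : ∀ g, 0 ≤ P g := fun g => prodProb_nonneg hp g
  have hP1 : ∑ g : Fin k → J, P g = 1 := sum_prodProb hp1 k
  have hsm := second_moment p v ψ c1 k hk hc1 hp1 hmean
  -- decomposition as a single real combination of dyads
  set σM : Matrix (Fin d) (Fin d) ℂ := ∑ j, (p j : ℂ) • dyadM (v j) (v j) with hσ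
  set cc : ((Fin k → J) ⊕ J) ⊕ Fin 1 → ℝ := Sum.elim
    (Sum.elim (fun g => P g / n g - P g) (fun j => c1 ^ 2 * p j / (k : ℝ)))
    (fun _ => -(1 / (k : ℝ))) with hcc
  set W : ((Fin k → J) ⊕ J) ⊕ Fin 1 → (Fin d → ℂ) := Sum.elim
    (Sum.elim (fun g => sparseVec c1 k v g) v) (fun _ => ψ) with hW
  have hdecomp : rhoOne p c1 k v - dyadM ψ ψ
      = ∑ i : ((Fin k → J) ⊕ J) ⊕ Fin 1, (cc i : ℂ) • dyadM (W i) (W i) := by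
    rw [Fintype.sum_sum_type, Fintype.sum_sum_type]
    simp only [hcc, hW, Sum.elim_inl, Sum.elim_inr, Fin.sum_univ_one]
    have hterm1 : (∑ g : Fin k → J, ((P g / n g - P g : ℝ) : ℂ) •
          dyadM (sparseVec c1 k v g) (sparseVec c1 k v g))
        = rhoOne p c1 k v - ∑ g : Fin k → J, ((P g : ℝ) : ℂ) •
          dyadM (sparseVec c1 k v g) (sparseVec c1 k v g) := by
      have hrho : rhoOne p c1 k v = ∑ g : Fin k → J,
          ((prodProb p g / nsq (sparseVec c1 k v g) : ℝ) : ℂ) •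
          dyadM (sparseVec c1 k v g) (sparseVec c1 k v g) := rfl
      rw [hrho, ← Finset.sum_sub_distrib]
      refine Finset.sum_congr rfl fun g _ => ?_
      rw [Complex.ofReal_sub, sub_smul]
    have hterm2 : (∑ j, ((c1 ^ 2 * p j / (k : ℝ) : ℝ) : ℂ) • dyadM (v j) (v j))
        = ((c1 ^ 2 / (k : ℝ) : ℝ) : ℂ) • σM := by
      rw [hσ, Finset.smul_sum]
      refine Finset.sum_congr rfl fun j _ => ?_
      rw [smul_smul]
      congr 1
      push_cast
      ring
    rw [hterm1, hterm2, hsm]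
    push_cast
    module
  have hbound := traceNorm_sum_dyad_le cc W
  rw [← hdecomp] at hbound
  rw [Fintype.sum_sum_type, Fintype.sum_sum_type] at hbound
  simp only [hcc, hW, Sum.elim_inl, Sum.elim_inr, Fin.sum_univ_one] at hbound
  have hT1 : (∑ g : Fin k → J, |P g / n g - P g| * nsq (sparseVec c1 k v g))
      = ∑ g : Fin k → J, P g * |1 - n g| := by
    refine Finset.sum_congr rfl fun g _ => ?_
    have hn0 : 0 < n g := hpos g
    have he : P g / n g - P g = P g * (1 - n g) / n g := by
      field_simp
    rw [show nsq (sparseVec c1 k v g) = n g from rfl, he, abs_div, abs_mul,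
      abs_of_nonneg (hPnn g), abs_of_pos hn0]
    field_simp
  have hT2 : (∑ j, |c1 ^ 2 * p j / (k : ℝ)| * nsq (v j)) = c1 ^ 2 / (k : ℝ) := by
    have : ∀ j, |c1 ^ 2 * p j / (k : ℝ)| * nsq (v j) = c1 ^ 2 / (k : ℝ) * p j := by
      intro j
      have hpj := hp j
      rw [hv j, mul_one, abs_of_nonneg (by positivity)]
      ring
    simp_rw [this]
    rw [← Finset.mul_sum, hp1, mul_one]
  have hT3 : |(-(1 / (k : ℝ)))| * nsq ψ = 1 / (k : ℝ) := by
    rw [hψ, mul_one, abs_neg, abs_of_nonneg (by positivity)]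
  rw [hT1, hT2, hT3] at hbound
  -- bound the expectation of |1 - n|
  have hstep : (∑ g : Fin k → J, P g * |1 - n g|)
      ≤ Real.sqrt (varNsq p c1 k v) + (c1 ^ 2 - 1) / (k : ℝ) := by
    have habs : ∀ g, |1 - n g| ≤ |μ - n g| + (c1 ^ 2 - 1) / (k : ℝ) := by
      intro g
      have h1 : (1 : ℝ) - n g = (μ - n g) - (μ - 1) := by ring
      have h2 : |μ - (1 : ℝ)| = (c1 ^ 2 - 1) / (k : ℝ) := by
        rw [hμ]
        rw [show (1 : ℝ) + (c1 ^ 2 - 1) / (k : ℝ) - 1 = (c1 ^ 2 - 1) / (k : ℝ) by ring]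
        refine abs_of_nonneg ?_
        have : (0 : ℝ) ≤ c1 ^ 2 - 1 := by nlinarith
        positivity
      calc |1 - n g| = |(μ - n g) - (μ - 1)| := by rw [← h1]
        _ ≤ |μ - n g| + |μ - 1| := abs_sub _ _
        _ = |μ - n g| + (c1 ^ 2 - 1) / (k : ℝ) := by rw [h2]
    have hsum1 : (∑ g : Fin k → J, P g * |1 - n g|)
        ≤ ∑ g : Fin k → J, (P g * |μ - n g| + P g * ((c1 ^ 2 - 1) / (k : ℝ))) := by
      refine Finset.sum_le_sum fun g _ => ?_
      have := mul_le_mul_of_nonneg_left (habs g) (hPnn g)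
      linarith [this]
    rw [Finset.sum_add_distrib, ← Finset.sum_mul, hP1, one_mul] at hsum1
    have hjen : (∑ g : Fin k → J, P g * |μ - n g|)
        ≤ Real.sqrt (∑ g : Fin k → J, P g * (μ - n g) ^ 2) :=
      jensen_abs P (fun g => μ - n g) hPnn hP1
    have hvar : (∑ g : Fin k → J, P g * (μ - n g) ^ 2) = varNsq p c1 k v := by
      unfold varNsq
      refine Finset.sum_congr rfl fun g _ => ?_
      rw [show (μ - n g) ^ 2 = (n g - μ) ^ 2 by ring]
    rw [hvar] at hjen
    linarith
  have hfinal : (c1 ^ 2 - 1) / (k : ℝ) + c1 ^ 2 / (k : ℝ) + 1 / (k : ℝ)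
      = 2 * c1 ^ 2 / (k : ℝ) := by
    field_simp
    ring
  calc traceNorm (rhoOne p c1 k v - dyadM ψ ψ)
      ≤ (∑ g : Fin k → J, P g * |1 - n g|) + c1 ^ 2 / (k : ℝ) + 1 / (k : ℝ) := hbound
    _ ≤ (Real.sqrt (varNsq p c1 k v) + (c1 ^ 2 - 1) / (k : ℝ)) + c1 ^ 2 / (k : ℝ)
        + 1 / (k : ℝ) := by linarith
    _ = 2 * c1 ^ 2 / (k : ℝ) + Real.sqrt (varNsq p c1 k v) := by linarith [hfinal]
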